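/- With γ(θ) = (2+θ²)/(a₀(1+θ²)^{3/2}) and the arc-length derivatives dγ/ds = γ'(θ)/(a₀√(1+θ²)), d²γ/ds² = γ''(θ)/(a₀²(1+θ²)) − θγ'(θ)/(a₀²(1+θ²)²), and with d(s) bounded and d(s)γ(s) → 0, the potential W̃(s) = γ²/(4(1−γd)²) + d|d²γ/ds²|/(2(1−γd)³) + (5/4)d²|dγ/ds|²/(1−dγ)⁴ satisfies W̃(s(θ)) = 1/(4a₀²θ²) + O(θ^{-3}) as θ → ∞. -/

import Mathlib

open Real Filter Asymptotics

lemma sqrt_hd (θ : ℝ) : HasDerivAt (fun t : ℝ => Real.sqrt (1 + t ^ 2))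
    (θ / Real.sqrt (1 + θ ^ 2)) θ := by
  have h1 : HasDerivAt (fun t : ℝ => 1 + t ^ 2) (2 * θ) θ := by
    simpa using ((hasDerivAt_pow 2 θ).const_add 1)
  have h2 := h1.sqrt (by positivity)
  convert h2 using 1
  have hs : Real.sqrt (1 + θ ^ 2) ≠ 0 := by positivity
  field_simp

lemma gamma_hd (a₀ : ℝ) (ha₀ : 0 < a₀) (θ : ℝ) :
    HasDerivAt (fun t : ℝ => (2 + t ^ 2) / (a₀ * ((1 + t ^ 2) * Real.sqrt (1 + t ^ 2))))
      (-θ * (4 + θ ^ 2) / (a₀ * ((1 + θ ^ 2) ^ 2 * Real.sqrt (1 + θ ^ 2)))) θ := by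
  have hs0 : (0:ℝ) < Real.sqrt (1 + θ ^ 2) := Real.sqrt_pos.mpr (by positivity)
  have hs2 : Real.sqrt (1 + θ ^ 2) ^ 2 = 1 + θ ^ 2 := Real.sq_sqrt (by positivity)
  have hnum : HasDerivAt (fun t : ℝ => 2 + t ^ 2) (2 * θ) θ := by
    simpa using ((hasDerivAt_pow 2 θ).const_add 2)
  have hq : HasDerivAt (fun t : ℝ => 1 + t ^ 2) (2 * θ) θ := by
    simpa using ((hasDerivAt_pow 2 θ).const_add 1)
  have hden : HasDerivAt (fun t : ℝ => a₀ * ((1 + t ^ 2) * Real.sqrt (1 + t ^ 2)))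
      (a₀ * (2 * θ * Real.sqrt (1 + θ ^ 2) + (1 + θ ^ 2) * (θ / Real.sqrt (1 + θ ^ 2)))) θ :=
    (hq.mul (sqrt_hd θ)).const_mul a₀
  have hden_ne : a₀ * ((1 + θ ^ 2) * Real.sqrt (1 + θ ^ 2)) ≠ 0 := by positivity
  have h := hnum.div hden hden_ne
  convert h using 1
  · rfl
  · rfl
  · rfl
  set s := Real.sqrt (1 + θ ^ 2)
  have key : (1:ℝ) + θ ^ 2 = s ^ 2 := hs2.symm
  rw [key]
  field_simp
  linear_combination (-2*θ) * hs2

lemma gamma1_hd (a₀ : ℝ) (ha₀ : 0 < a₀) (θ : ℝ) :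
    HasDerivAt (fun t : ℝ => -t * (4 + t ^ 2) / (a₀ * ((1 + t ^ 2) ^ 2 * Real.sqrt (1 + t ^ 2))))
      ((2 * θ ^ 4 + 13 * θ ^ 2 - 4) / (a₀ * ((1 + θ ^ 2) ^ 3 * Real.sqrt (1 + θ ^ 2)))) θ := by
  have hs0 : (0:ℝ) < Real.sqrt (1 + θ ^ 2) := Real.sqrt_pos.mpr (by positivity)
  have hs2 : Real.sqrt (1 + θ ^ 2) ^ 2 = 1 + θ ^ 2 := Real.sq_sqrt (by positivity)
  have hq : HasDerivAt (fun t : ℝ => 1 + t ^ 2) (2 * θ) θ := by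
    simpa using ((hasDerivAt_pow 2 θ).const_add 1)
  have hnum : HasDerivAt (fun t : ℝ => -t * (4 + t ^ 2)) (-(4 + 3 * θ ^ 2)) θ := by
    have h1 : HasDerivAt (fun t : ℝ => -t * (4 + t ^ 2)) ((-1) * (4 + θ ^ 2) + (-θ) * (2 * θ)) θ :=
      (hasDerivAt_id θ).neg.mul (by simpa using ((hasDerivAt_pow 2 θ).const_add 4))
    convert h1 using 1; ring
  have hq2 : HasDerivAt (fun t : ℝ => (1 + t ^ 2) ^ 2) (2 * (1 + θ ^ 2) * (2 * θ)) θ := by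
    simpa using hq.fun_pow 2
  have hden : HasDerivAt (fun t : ℝ => a₀ * ((1 + t ^ 2) ^ 2 * Real.sqrt (1 + t ^ 2)))
      (a₀ * (2 * (1 + θ ^ 2) * (2 * θ) * Real.sqrt (1 + θ ^ 2)
        + (1 + θ ^ 2) ^ 2 * (θ / Real.sqrt (1 + θ ^ 2)))) θ :=
    (hq2.mul (sqrt_hd θ)).const_mul a₀
  have hden_ne : a₀ * ((1 + θ ^ 2) ^ 2 * Real.sqrt (1 + θ ^ 2)) ≠ 0 := by positivity
  have h := hnum.div hden hden_ne
  convert h using 1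
  · rfl
  · rfl
  · rfl
  set s := Real.sqrt (1 + θ ^ 2)
  have key : (1:ℝ) + θ ^ 2 = s ^ 2 := hs2.symm
  rw [key]
  field_simp
  linear_combination (3*θ^2+4) * hs2

lemma pow32 (x : ℝ) (hx : 0 < x) : x ^ ((3:ℝ)/2) = x * Real.sqrt x := by
  rw [Real.sqrt_eq_rpow, show (3:ℝ)/2 = 1 + 1/2 by norm_num, Real.rpow_add hx, Real.rpow_one]

lemma bound_g (a₀ θ s : ℝ) (ha₀ : 0 < a₀) (hθ1 : 1 ≤ θ) (hs0 : 0 < s) (hsθ : θ ≤ s) :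
    (2 + θ ^ 2) / (a₀ * ((1 + θ ^ 2) * s)) ≤ 3 / (a₀ * θ) := by
  have hθ0 : (0:ℝ) < θ := lt_of_lt_of_le one_pos hθ1
  rw [div_le_div_iff₀ (by positivity) (by positivity)]
  nlinarith [mul_le_mul_of_nonneg_left hsθ (show (0:ℝ) ≤ 3 * a₀ * (1 + θ ^ 2) by positivity),
    mul_pos ha₀ hθ0, sq_nonneg θ]

lemma bound_g1 (a₀ θ s : ℝ) (ha₀ : 0 < a₀) (hθ1 : 1 ≤ θ) (hs0 : 0 < s) (hsθ : θ ≤ s) :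
    |(-θ * (4 + θ ^ 2)) / (a₀ * ((1 + θ ^ 2) ^ 2 * s))| ≤ 5 / (a₀ * θ ^ 2) := by
  have hθ0 : (0:ℝ) < θ := lt_of_lt_of_le one_pos hθ1
  rw [abs_div, abs_of_pos (show (0:ℝ) < a₀ * ((1 + θ ^ 2) ^ 2 * s) by positivity),
    abs_of_nonpos (show -θ * (4 + θ ^ 2) ≤ 0 by nlinarith)]
  rw [div_le_div_iff₀ (by positivity) (by positivity)]
  nlinarith [mul_le_mul_of_nonneg_left hsθ
    (show (0:ℝ) ≤ 5 * a₀ * (1 + θ ^ 2) ^ 2 by positivity), sq_nonneg θ, sq_nonneg (θ ^ 2),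
    mul_pos ha₀ hθ0, hθ1]

lemma bound_g2 (a₀ θ s : ℝ) (ha₀ : 0 < a₀) (hθ1 : 1 ≤ θ) (hs0 : 0 < s) (hsθ : θ ≤ s) :
    |(2 * θ ^ 4 + 13 * θ ^ 2 - 4) / (a₀ * ((1 + θ ^ 2) ^ 3 * s))| ≤ 19 / (a₀ * θ ^ 3) := by
  have hθ0 : (0:ℝ) < θ := lt_of_lt_of_le one_pos hθ1
  rw [abs_div, abs_of_pos (show (0:ℝ) < a₀ * ((1 + θ ^ 2) ^ 3 * s) by positivity),
    abs_of_nonneg (show (0:ℝ) ≤ 2 * θ ^ 4 + 13 * θ ^ 2 - 4 by nlinarith)]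
  rw [div_le_div_iff₀ (by positivity) (by positivity)]
  nlinarith [mul_le_mul_of_nonneg_left hsθ
    (show (0:ℝ) ≤ 19 * a₀ * (1 + θ ^ 2) ^ 3 by positivity), sq_nonneg θ, sq_nonneg (θ ^ 2),
    sq_nonneg (θ ^ 3), mul_pos ha₀ hθ0, hθ1]

lemma bound_D1 (a₀ θ s B : ℝ) (ha₀ : 0 < a₀) (hθ1 : 1 ≤ θ) (hs0 : 0 < s) (hsθ : θ ≤ s)
    (hB : |B| ≤ 5 / (a₀ * θ ^ 2)) : |B / (a₀ * s)| ≤ 5 / (a₀ ^ 2 * θ ^ 3) := by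
  have hθ0 : (0:ℝ) < θ := lt_of_lt_of_le one_pos hθ1
  rw [abs_div, abs_of_pos (show (0:ℝ) < a₀ * s by positivity)]
  calc |B| / (a₀ * s) ≤ (5 / (a₀ * θ ^ 2)) / (a₀ * θ) := by
        apply div_le_div₀ (by positivity) hB (by positivity)
        have := mul_le_mul_of_nonneg_left hsθ ha₀.le
        linarith
    _ = 5 / (a₀ ^ 2 * θ ^ 3) := by field_simp

lemma bound_D2 (a₀ θ A B : ℝ) (ha₀ : 0 < a₀) (hθ1 : 1 ≤ θ)
    (hA : |A| ≤ 19 / (a₀ * θ ^ 3)) (hB : |B| ≤ 5 / (a₀ * θ ^ 2)) :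
    |A / (a₀ ^ 2 * (1 + θ ^ 2)) - θ * B / (a₀ ^ 2 * (1 + θ ^ 2) ^ 2)|
      ≤ 24 / (a₀ ^ 3 * θ ^ 3) := by
  have hθ0 : (0:ℝ) < θ := lt_of_lt_of_le one_pos hθ1
  have htri : |A / (a₀ ^ 2 * (1 + θ ^ 2)) - θ * B / (a₀ ^ 2 * (1 + θ ^ 2) ^ 2)|
      ≤ |A / (a₀ ^ 2 * (1 + θ ^ 2))| + |θ * B / (a₀ ^ 2 * (1 + θ ^ 2) ^ 2)| := abs_sub _ _
  refine htri.trans ?_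
  have hpart1 : |A / (a₀ ^ 2 * (1 + θ ^ 2))| ≤ 19 / (a₀ ^ 3 * θ ^ 3) := by
    rw [abs_div, abs_of_pos (show (0:ℝ) < a₀ ^ 2 * (1 + θ ^ 2) by positivity)]
    calc |A| / (a₀ ^ 2 * (1 + θ ^ 2))
        ≤ (19 / (a₀ * θ ^ 3)) / (a₀ ^ 2 * 1) := by
          apply div_le_div₀ (by positivity) hA (by positivity)
          nlinarith [sq_nonneg θ, sq_nonneg a₀]
      _ = 19 / (a₀ ^ 3 * θ ^ 3) := by field_simp
  have hpart2 : |θ * B / (a₀ ^ 2 * (1 + θ ^ 2) ^ 2)| ≤ 5 / (a₀ ^ 3 * θ ^ 3) := by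
    rw [abs_div, abs_of_pos (show (0:ℝ) < a₀ ^ 2 * (1 + θ ^ 2) ^ 2 by positivity), abs_mul,
      abs_of_pos hθ0]
    calc θ * |B| / (a₀ ^ 2 * (1 + θ ^ 2) ^ 2)
        ≤ (θ * (5 / (a₀ * θ ^ 2))) / (a₀ ^ 2 * (θ ^ 2) ^ 2) := by
          apply div_le_div₀ (by positivity)
            (mul_le_mul_of_nonneg_left hB hθ0.le) (by positivity)
          nlinarith [sq_nonneg θ, sq_nonneg (θ ^ 2), sq_nonneg a₀]
      _ = 5 / (a₀ ^ 3 * θ ^ 5) := by field_simp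
      _ ≤ 5 / (a₀ ^ 3 * θ ^ 3) := by
          apply div_le_div_of_nonneg_left (by norm_num) (by positivity)
          have h35 : θ ^ 3 ≤ θ ^ 5 := by
            nlinarith [mul_le_mul_of_nonneg_left (show (1:ℝ) ≤ θ ^ 2 by nlinarith)
              (pow_nonneg hθ0.le 3)]
          nlinarith [mul_le_mul_of_nonneg_left h35 (pow_nonneg ha₀.le 3)]
  have hsum : 19 / (a₀ ^ 3 * θ ^ 3) + 5 / (a₀ ^ 3 * θ ^ 3) = 24 / (a₀ ^ 3 * θ ^ 3) := by ring
  linarith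

lemma bound_T1 (a₀ θ g x M : ℝ) (ha₀ : 0 < a₀) (hθ1 : 1 ≤ θ) (hg0 : 0 < g)
    (hgle : g ≤ 3 / (a₀ * θ)) (hxabs : |x| ≤ 1 / 2) (hxM : |x| ≤ M * g) (hM0 : 0 ≤ M) :
    |g ^ 2 / (4 * (1 - x) ^ 2) - g ^ 2 / 4| ≤ 68 * M / (a₀ ^ 3 * θ ^ 3) := by
  have hθ0 : (0:ℝ) < θ := lt_of_lt_of_le one_pos hθ1
  have hx1 : (1:ℝ)/2 ≤ 1 - x := by have := abs_le.mp hxabs; linarith [this.2]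
  have hx1' : (0:ℝ) < 1 - x := by linarith
  have e1 : g ^ 2 / (4 * (1 - x) ^ 2) - g ^ 2 / 4
      = g ^ 2 * (x * (2 - x)) / (4 * (1 - x) ^ 2) := by
    field_simp
    ring
  rw [e1, abs_div, abs_of_pos (show (0:ℝ) < 4 * (1 - x) ^ 2 by positivity), abs_mul, abs_mul,
    abs_of_pos (show (0:ℝ) < g ^ 2 by positivity)]
  have hx2le : |2 - x| ≤ 5 / 2 := by
    have := abs_le.mp hxabs
    rw [abs_le]; constructor <;> linarith [this.1, this.2]
  calc g ^ 2 * (|x| * |2 - x|) / (4 * (1 - x) ^ 2)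
      ≤ (3 / (a₀ * θ)) ^ 2 * ((M * g) * (5 / 2)) / (4 * (1 / 2) ^ 2) := by
        apply div_le_div₀ (by positivity) ?_ (by positivity) (by nlinarith)
        have h1 : g ^ 2 ≤ (3 / (a₀ * θ)) ^ 2 := by
          apply pow_le_pow_left₀ hg0.le hgle
        apply mul_le_mul h1 (mul_le_mul hxM hx2le (abs_nonneg _) (by positivity))
          (by positivity) (by positivity)
    _ ≤ (3 / (a₀ * θ)) ^ 2 * ((M * (3 / (a₀ * θ))) * (5 / 2)) / (4 * (1 / 2) ^ 2) := by
        gcongr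
    _ = (135 / 2) * M / (a₀ ^ 3 * θ ^ 3) := by field_simp; ring
    _ ≤ 68 * M / (a₀ ^ 3 * θ ^ 3) := by gcongr; linarith

lemma bound_T2 (a₀ θ g : ℝ) (ha₀ : 0 < a₀) (hθ1 : 1 ≤ θ)
    (hg2val : g ^ 2 = (2 + θ ^ 2) ^ 2 / (a₀ ^ 2 * (1 + θ ^ 2) ^ 3)) :
    |g ^ 2 / 4 - 1 / (4 * a₀ ^ 2 * θ ^ 2)| ≤ 1 / (a₀ ^ 2 * θ ^ 3) := by
  have hθ0 : (0:ℝ) < θ := lt_of_lt_of_le one_pos hθ1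
  have e2 : g ^ 2 / 4 - 1 / (4 * a₀ ^ 2 * θ ^ 2)
      = (θ ^ 4 + θ ^ 2 - 1) / (4 * a₀ ^ 2 * θ ^ 2 * (1 + θ ^ 2) ^ 3) := by
    rw [hg2val]
    field_simp
    ring
  rw [e2, abs_of_nonneg (div_nonneg (by nlinarith) (by positivity))]
  have h12 : (1:ℝ) ≤ θ ^ 2 := by nlinarith
  have h24 : θ ^ 2 ≤ θ ^ 4 := by nlinarith [mul_le_mul_of_nonneg_left h12 (sq_nonneg θ)]
  have hnum2 : θ ^ 4 + θ ^ 2 - 1 ≤ 2 * θ ^ 4 := by linarith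
  calc (θ ^ 4 + θ ^ 2 - 1) / (4 * a₀ ^ 2 * θ ^ 2 * (1 + θ ^ 2) ^ 3)
      ≤ (2 * θ ^ 4) / (4 * a₀ ^ 2 * θ ^ 2 * (θ ^ 2) ^ 3) := by
        apply div_le_div₀ (by positivity) hnum2 (by positivity)
        have hq3 : (θ ^ 2) ^ 3 ≤ (1 + θ ^ 2) ^ 3 :=
          pow_le_pow_left₀ (by positivity) (by linarith) 3
        nlinarith [mul_le_mul_of_nonneg_left hq3
          (show (0:ℝ) ≤ 4 * a₀ ^ 2 * θ ^ 2 by positivity)]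
    _ = 1 / (2 * a₀ ^ 2 * θ ^ 4) := by field_simp; ring
    _ ≤ 1 / (a₀ ^ 2 * θ ^ 3) := by
        apply div_le_div_of_nonneg_left (by norm_num) (by positivity)
        nlinarith [mul_le_mul_of_nonneg_left (show (1:ℝ) ≤ 2 * θ by linarith)
          (show (0:ℝ) ≤ a₀ ^ 2 * θ ^ 3 by positivity)]

lemma bound_T3 (a₀ θ d D x M : ℝ) (ha₀ : 0 < a₀) (hθ1 : 1 ≤ θ) (hdM : |d| ≤ M) (hM0 : 0 ≤ M)
    (hD : |D| ≤ 24 / (a₀ ^ 3 * θ ^ 3)) (hx1 : 1 / 2 ≤ 1 - x) :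
    |d * |D| / (2 * (1 - x) ^ 3)| ≤ 96 * M / (a₀ ^ 3 * θ ^ 3) := by
  have hθ0 : (0:ℝ) < θ := lt_of_lt_of_le one_pos hθ1
  have hx1' : (0:ℝ) < 1 - x := by linarith
  rw [abs_div, abs_of_pos (show (0:ℝ) < 2 * (1 - x) ^ 3 by positivity), abs_mul, abs_abs]
  calc |d| * |D| / (2 * (1 - x) ^ 3)
      ≤ (M * (24 / (a₀ ^ 3 * θ ^ 3))) / (2 * (1 / 2) ^ 3) := by
        apply div_le_div₀ (by positivity)
          (mul_le_mul hdM hD (abs_nonneg _) hM0) (by positivity)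
          (by nlinarith [pow_le_pow_left₀ (show (0:ℝ) ≤ 1/2 by norm_num) hx1 3])
    _ = 96 * M / (a₀ ^ 3 * θ ^ 3) := by field_simp; ring

lemma bound_T4 (a₀ θ d D x M : ℝ) (ha₀ : 0 < a₀) (hθ1 : 1 ≤ θ) (hdM : |d| ≤ M) (hM0 : 0 ≤ M)
    (hD : |D| ≤ 5 / (a₀ ^ 2 * θ ^ 3)) (hx1 : 1 / 2 ≤ 1 - x) :
    |(5 / 4) * d ^ 2 * |D| ^ 2 / (1 - x) ^ 4| ≤ 500 * M ^ 2 / (a₀ ^ 4 * θ ^ 3) := by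
  have hθ0 : (0:ℝ) < θ := lt_of_lt_of_le one_pos hθ1
  have hx1' : (0:ℝ) < 1 - x := by linarith
  rw [abs_div, abs_of_pos (show (0:ℝ) < (1 - x) ^ 4 by positivity),
    abs_of_nonneg (show (0:ℝ) ≤ (5 / 4) * d ^ 2 * |D| ^ 2 by positivity)]
  have hdd2 : d ^ 2 ≤ M ^ 2 := by
    nlinarith [abs_nonneg d, sq_abs d]
  have hD1sq : |D| ^ 2 ≤ (5 / (a₀ ^ 2 * θ ^ 3)) ^ 2 :=
    pow_le_pow_left₀ (abs_nonneg _) hD 2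
  calc (5 / 4) * d ^ 2 * |D| ^ 2 / (1 - x) ^ 4
      ≤ ((5 / 4) * M ^ 2 * (5 / (a₀ ^ 2 * θ ^ 3)) ^ 2) / ((1 / 2) ^ 4) := by
        apply div_le_div₀ (by positivity) ?_ (by positivity)
          (by nlinarith [pow_le_pow_left₀ (show (0:ℝ) ≤ 1/2 by norm_num) hx1 4])
        apply mul_le_mul (by nlinarith) hD1sq (by positivity) (by positivity)
    _ = 500 * M ^ 2 / (a₀ ^ 4 * θ ^ 6) := by field_simp; ring
    _ ≤ 500 * M ^ 2 / (a₀ ^ 4 * θ ^ 3) := by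
        apply div_le_div_of_nonneg_left (by positivity) (by positivity)
        have h13 : (1:ℝ) ≤ θ ^ 3 := by
          nlinarith [pow_le_pow_left₀ (show (0:ℝ) ≤ 1 by norm_num) hθ1 3]
        have h36 : θ ^ 3 ≤ θ ^ 6 := by
          nlinarith [mul_le_mul_of_nonneg_left h13 (pow_nonneg hθ0.le 3)]
        nlinarith [mul_le_mul_of_nonneg_left h36 (pow_nonneg ha₀.le 4)]

set_option maxHeartbeats 2000000 in
theorem effective_potential_archimedean (a₀ : ℝ) (ha₀ : 0 < a₀)
    (γ dγds dγds2 dd Wt : ℝ → ℝ)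
    (hγ : ∀ θ : ℝ, γ θ = (2 + θ ^ 2) / (a₀ * (1 + θ ^ 2) ^ ((3 : ℝ) / 2)))
    (hdγds : ∀ θ : ℝ, dγds θ = deriv γ θ / (a₀ * Real.sqrt (1 + θ ^ 2)))
    (hdγds2 : ∀ θ : ℝ, dγds2 θ =
      deriv (deriv γ) θ / (a₀ ^ 2 * (1 + θ ^ 2))
        - θ * deriv γ θ / (a₀ ^ 2 * (1 + θ ^ 2) ^ 2))
    (hddb : ∃ M, ∀ θ : ℝ, |dd θ| ≤ M)
    (hddγ : Tendsto (fun θ : ℝ => dd θ * γ θ) atTop (nhds 0))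
    (hWt : ∀ θ : ℝ, Wt θ =
      γ θ ^ 2 / (4 * (1 - γ θ * dd θ) ^ 2)
        + dd θ * |dγds2 θ| / (2 * (1 - γ θ * dd θ) ^ 3)
        + (5 / 4) * dd θ ^ 2 * |dγds θ| ^ 2 / (1 - dd θ * γ θ) ^ 4) :
    (fun θ : ℝ => Wt θ - 1 / (4 * a₀ ^ 2 * θ ^ 2)) =O[atTop]
      (fun θ : ℝ => 1 / θ ^ 3) := by
  obtain ⟨M₀, hM₀⟩ := hddb
  set M : ℝ := max M₀ 0 with hMdef
  have hM : ∀ θ : ℝ, |dd θ| ≤ M := fun θ => (hM₀ θ).trans (le_max_left _ _)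
  have hM0 : 0 ≤ M := le_max_right _ _
  have hγe : γ = fun θ : ℝ => (2 + θ ^ 2) / (a₀ * ((1 + θ ^ 2) * Real.sqrt (1 + θ ^ 2))) := by
    funext θ
    rw [hγ θ, pow32 _ (by positivity)]
  have hd1 : deriv γ = fun θ : ℝ =>
      -θ * (4 + θ ^ 2) / (a₀ * ((1 + θ ^ 2) ^ 2 * Real.sqrt (1 + θ ^ 2))) := by
    funext θ
    rw [hγe]
    exact (gamma_hd a₀ ha₀ θ).deriv
  have hd2 : deriv (deriv γ) = fun θ : ℝ =>
      (2 * θ ^ 4 + 13 * θ ^ 2 - 4) / (a₀ * ((1 + θ ^ 2) ^ 3 * Real.sqrt (1 + θ ^ 2))) := by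
    funext θ
    rw [hd1]
    exact (gamma1_hd a₀ ha₀ θ).deriv
  rw [isBigO_iff]
  refine ⟨68 * M / a₀ ^ 3 + 1 / a₀ ^ 2 + 96 * M / a₀ ^ 3 + 500 * M ^ 2 / a₀ ^ 4, ?_⟩
  have hsm : ∀ᶠ θ : ℝ in atTop, |dd θ * γ θ| ≤ 1 / 2 := by
    have h := Metric.tendsto_nhds.mp hddγ (1 / 2) (by norm_num)
    filter_upwards [h] with θ hθ
    rw [Real.dist_eq, sub_zero] at hθ
    linarith
  filter_upwards [eventually_ge_atTop (1 : ℝ), hsm] with θ hθ1 hx2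
  have hθ0 : (0:ℝ) < θ := lt_of_lt_of_le one_pos hθ1
  set s := Real.sqrt (1 + θ ^ 2) with hsdef
  have hs0 : 0 < s := Real.sqrt_pos.mpr (by positivity)
  have hs2 : s ^ 2 = 1 + θ ^ 2 := Real.sq_sqrt (by positivity)
  have hsθ : θ ≤ s := by
    have h1 : Real.sqrt (θ ^ 2) ≤ s := Real.sqrt_le_sqrt (by nlinarith)
    rwa [Real.sqrt_sq hθ0.le] at h1
  have hgv : γ θ = (2 + θ ^ 2) / (a₀ * ((1 + θ ^ 2) * s)) := by rw [hγe]
  have hg1v : deriv γ θ = -θ * (4 + θ ^ 2) / (a₀ * ((1 + θ ^ 2) ^ 2 * s)) := by rw [hd1]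
  have hg2v : deriv (deriv γ) θ = (2 * θ ^ 4 + 13 * θ ^ 2 - 4) / (a₀ * ((1 + θ ^ 2) ^ 3 * s)) := by
    rw [hd2]
  have hgpos : 0 < γ θ := by rw [hgv]; positivity
  have hgle : γ θ ≤ 3 / (a₀ * θ) := by
    rw [hgv]; exact bound_g a₀ θ s ha₀ hθ1 hs0 hsθ
  have hg1abs : |deriv γ θ| ≤ 5 / (a₀ * θ ^ 2) := by
    rw [hg1v]; exact bound_g1 a₀ θ s ha₀ hθ1 hs0 hsθ
  have hg2abs : |deriv (deriv γ) θ| ≤ 19 / (a₀ * θ ^ 3) := by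
    rw [hg2v]; exact bound_g2 a₀ θ s ha₀ hθ1 hs0 hsθ
  have hD1 : |dγds θ| ≤ 5 / (a₀ ^ 2 * θ ^ 3) := by
    rw [hdγds θ]; exact bound_D1 a₀ θ s (deriv γ θ) ha₀ hθ1 hs0 hsθ hg1abs
  have hD2 : |dγds2 θ| ≤ 24 / (a₀ ^ 3 * θ ^ 3) := by
    rw [hdγds2 θ]
    exact bound_D2 a₀ θ (deriv (deriv γ) θ) (deriv γ θ) ha₀ hθ1 hg2abs hg1abs
  have hxabs : |γ θ * dd θ| ≤ 1 / 2 := by rwa [mul_comm] at hx2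
  have hx1 : (1:ℝ)/2 ≤ 1 - γ θ * dd θ := by
    have := abs_le.mp hxabs
    linarith [this.2]
  have hxM : |γ θ * dd θ| ≤ M * γ θ := by
    rw [abs_mul, abs_of_pos hgpos]
    calc γ θ * |dd θ| ≤ γ θ * M := mul_le_mul_of_nonneg_left (hM θ) hgpos.le
      _ = M * γ θ := mul_comm _ _
  set x := γ θ * dd θ with hxdef
  have hkey : Wt θ - 1 / (4 * a₀ ^ 2 * θ ^ 2)
      = (γ θ ^ 2 / (4 * (1 - x) ^ 2) - γ θ ^ 2 / 4)
        + (γ θ ^ 2 / 4 - 1 / (4 * a₀ ^ 2 * θ ^ 2))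
        + dd θ * |dγds2 θ| / (2 * (1 - x) ^ 3)
        + (5 / 4) * dd θ ^ 2 * |dγds θ| ^ 2 / (1 - dd θ * γ θ) ^ 4 := by
    rw [hWt θ]; ring
  rw [hkey]
  have habs4 : |(γ θ ^ 2 / (4 * (1 - x) ^ 2) - γ θ ^ 2 / 4)
        + (γ θ ^ 2 / 4 - 1 / (4 * a₀ ^ 2 * θ ^ 2))
        + dd θ * |dγds2 θ| / (2 * (1 - x) ^ 3)
        + (5 / 4) * dd θ ^ 2 * |dγds θ| ^ 2 / (1 - dd θ * γ θ) ^ 4|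
      ≤ |γ θ ^ 2 / (4 * (1 - x) ^ 2) - γ θ ^ 2 / 4|
        + |γ θ ^ 2 / 4 - 1 / (4 * a₀ ^ 2 * θ ^ 2)|
        + |dd θ * |dγds2 θ| / (2 * (1 - x) ^ 3)|
        + |(5 / 4) * dd θ ^ 2 * |dγds θ| ^ 2 / (1 - dd θ * γ θ) ^ 4| := by
    exact (abs_add_le _ _).trans (by gcongr; exact (abs_add_le _ _).trans (by gcongr; exact abs_add_le _ _))
  refine habs4.trans ?_
  rw [Real.norm_eq_abs]
  have hT1 := bound_T1 a₀ θ (γ θ) x M ha₀ hθ1 hgpos hgle hxabs hxM hM0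
  have hg2val : γ θ ^ 2 = (2 + θ ^ 2) ^ 2 / (a₀ ^ 2 * (1 + θ ^ 2) ^ 3) := by
    rw [hgv, div_pow]
    congr 1
    rw [mul_pow, mul_pow, hs2]
    ring
  have hT2 := bound_T2 a₀ θ (γ θ) ha₀ hθ1 hg2val
  have hT3 := bound_T3 a₀ θ (dd θ) (dγds2 θ) x M ha₀ hθ1 (hM θ) hM0 hD2 hx1
  have hcomm : (1 - dd θ * γ θ) = 1 - x := by rw [hxdef, mul_comm]
  have hT4' := bound_T4 a₀ θ (dd θ) (dγds θ) x M ha₀ hθ1 (hM θ) hM0 hD1 hx1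
  rw [hcomm]
  have hfin : 68 * M / (a₀ ^ 3 * θ ^ 3) + 1 / (a₀ ^ 2 * θ ^ 3) + 96 * M / (a₀ ^ 3 * θ ^ 3)
      + 500 * M ^ 2 / (a₀ ^ 4 * θ ^ 3)
      = (68 * M / a₀ ^ 3 + 1 / a₀ ^ 2 + 96 * M / a₀ ^ 3 + 500 * M ^ 2 / a₀ ^ 4) * |1 / θ ^ 3| := by
    rw [abs_of_pos (show (0:ℝ) < 1 / θ ^ 3 by positivity)]
    field_simp
  linarith [hT1, hT2, hT3, hT4']
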